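/- Let d be a natural number and let M : Matrix (Fin d) (Fin d) ℝ be a weighted adjacency matrix. The support relation of M (the relation i → j holding when M i j ≠ 0) is acyclic (for every vertex i, ¬ Relation.TransGen (fun i j => M i j ≠ 0) i i) if and only if there exist a priority-score vector p : Fin d → ℝ and a weight matrix W : Matrix (Fin d) (Fin d) ℝ such that for all i, j, M i j = W i j * max (p j − p i) 0; i.e., M = W ∘ ReLU(grad(p)) where ∘ is the entrywise (Hadamard) product. -/
import Mathlib


/-- **No-Curl characterization of weighted DAGs.** The support relation of a weighted
adjacency matrix `M` is acyclic iff there exist a priority-score vector `p` and a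
weight matrix `W` with `M i j = W i j * max (p j - p i) 0`, i.e.
`M = W ∘ ReLU(grad p)`. -/
theorem noCurl_characterization (d : ℕ) (M : Matrix (Fin d) (Fin d) ℝ) :
    (∀ i : Fin d, ¬ Relation.TransGen (fun i j => M i j ≠ 0) i i) ↔
      ∃ (p : Fin d → ℝ) (W : Matrix (Fin d) (Fin d) ℝ),
        ∀ i j : Fin d, M i j = W i j * max (p j - p i) 0 := by
  classical
  constructor
  · intro h
    set r := fun i j : Fin d => M i j ≠ 0 with hr
    set p : Fin d → ℝ :=
      fun i => ((Finset.univ.filter (fun k => Relation.TransGen r k i)).card : ℝ) with hp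
    have key : ∀ i j, r i j → p i < p j := by
      intro i j hij
      have hsub : Finset.univ.filter (fun k => Relation.TransGen r k i) ⊂
          Finset.univ.filter (fun k => Relation.TransGen r k j) := by
        constructor
        · intro k hk
          simp only [Finset.mem_filter] at *
          exact ⟨hk.1, hk.2.trans (Relation.TransGen.single hij)⟩
        · intro hc
          have hmem : i ∈ Finset.univ.filter (fun k => Relation.TransGen r k j) := by
            simp only [Finset.mem_filter, Finset.mem_univ, true_and]
            exact Relation.TransGen.single hij
          have := hc hmem
          simp only [Finset.mem_filter, Finset.mem_univ, true_and] at this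
          exact h i this
      have := Finset.card_lt_card hsub
      simp only [hp]
      exact_mod_cast this
    refine ⟨p, fun i j => M i j / max (p j - p i) 0, fun i j => ?_⟩
    by_cases hM : M i j = 0
    · simp [hM]
    · have hlt := key i j hM
      have hpos : (0:ℝ) < p j - p i := by linarith
      have hmax : max (p j - p i) 0 = p j - p i := max_eq_left hpos.le
      show M i j = M i j / ((p j - p i) ⊔ 0) * ((p j - p i) ⊔ 0)
      rw [hmax, div_mul_cancel₀ _ hpos.ne']
  · rintro ⟨p, W, hW⟩ i hcyc
    have mono : ∀ a b : Fin d, Relation.TransGen (fun i j => M i j ≠ 0) a b → p a < p b := by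
      intro a b hab
      induction hab with
      | @single c hc =>
        by_contra hle
        push_neg at hle
        have : max (p c - p a) 0 = 0 := max_eq_right (by linarith)
        exact hc (by rw [hW a c, this, mul_zero])
      | @tail b' c hab' h' ih =>
        have hbc : p b' < p c := by
          by_contra hle
          push_neg at hle
          have : max (p c - p b') 0 = 0 := max_eq_right (by linarith)
          exact h' (by rw [hW b' c, this, mul_zero])
        exact ih.trans hbc
    exact lt_irrefl _ (mono i i hcyc)
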